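/- The set of 29 rules for a locomotive turning around three contiguous cells (Table 13 of the paper, rules 90–118) is rotation-consistent. The rules are: (W,WBWBWBBWBW,W), (W,RBWBWBBWBW,R), (R,WBWBWBBWBW,W), (B,BWWWWWWWWR,B), (W,WBRBWBBWBW,W), (W,WBWBWBBRBW,W), (B,BWWWWWWWRW,B), (B,BWRWWWWWWW,B), (W,BWBWRWBWWB,R), (B,BWWBWWWWRW,B), (B,BWRBWWWWWW,B), (B,BWWBWWWRWW,B), (B,BRWBWWWWWW,B), (B,BWWBWWRWWW,B), (R,RBWBWBBWBW,R), (R,WBRBWBBWBW,W), (B,BWWRWWWWWR,B), (W,WBRBWBBRBW,W), (B,BWRWWWWRWW,B), (W,BWBWRRBWWB,R), (B,BWRBWWWWRW,B), (B,BWWRWWWWRW,B), (B,BWRBWWWRWW,B), (B,BRWBWWWRWW,B), (R,BRWBWWBBWB,R), (R,BWWBRWBBWB,W), (W,BWWBRRBBWB,W), (W,WBRWBWBRBW,R), (R,WBRWBWBWBW,R). -/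
import Mathlib


/-- The three states of the cellular automaton: W (white, quiescent),
B (blue) and R (red). -/
inductive CAState : Type
  | W | B | R
  deriving DecidableEq, Repr

open CAState

/-- A neighbourhood: a word of length 10 over {W,B,R}; positions 0-4
(paper's 1-5) are the side-neighbours, positions 5-9 (paper's 6-10)
the vertex-neighbours. -/
abbrev Nbhd := Fin 10 → CAState

/-- Build a neighbourhood from its ten letters. -/
def nb (a b c d e f g h i j : CAState) : Nbhd := ![a, b, c, d, e, f, g, h, i, j]

/-- The rotation ρ: simultaneous cyclic shift of the side part and of the
vertex part: ρ(x1…x10) = x2x3x4x5x1x7x8x9x10x6. -/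
def rho (n : Nbhd) : Nbhd := fun i => n (![1, 2, 3, 4, 0, 6, 7, 8, 9, 5] i)

/-- Two neighbourhoods are rotation-equivalent if one is ρ^k of the other. -/
def RotEquiv (n m : Nbhd) : Prop := ∃ k : ℕ, n = rho^[k] m

/-- A rule: (current state, neighbourhood, new state). -/
abbrev Rule := CAState × Nbhd × CAState

/-- A set of rules is rotation-consistent if any two rules with the same
current state and rotation-equivalent neighbourhoods have the same new
state. -/
def RotationConsistent (L : List Rule) : Prop :=
  ∀ r₁ ∈ L, ∀ r₂ ∈ L, r₁.1 = r₂.1 → RotEquiv r₁.2.1 r₂.2.1 → r₁.2.2 = r₂.2.2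

lemma rho_five (n : Nbhd) : rho^[5] n = n := by
  funext i
  fin_cases i <;> rfl

lemma rho_mod (k : ℕ) (n : Nbhd) : rho^[k] n = rho^[k % 5] n := by
  conv_lhs => rw [← Nat.mod_add_div k 5, Function.iterate_add_apply]
  congr 1
  rw [Function.iterate_mul]
  induction k / 5 with
  | zero => rfl
  | succ q ih => rw [Function.iterate_succ_apply, rho_five, ih]

lemma rotEquiv_iff (n m : Nbhd) :
    RotEquiv n m ↔ ∃ k ∈ Finset.range 5, n = rho^[k] m := by
  constructor
  · rintro ⟨k, rfl⟩
    exact ⟨k % 5, Finset.mem_range.mpr (Nat.mod_lt _ (by norm_num)), rho_mod k m⟩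
  · rintro ⟨k, _, rfl⟩
    exact ⟨k, rfl⟩

theorem three_cell_rules_rotation_consistent :
    RotationConsistent [
    (W, nb W B W B W B B W B W, W),
    (W, nb R B W B W B B W B W, R),
    (R, nb W B W B W B B W B W, W),
    (B, nb B W W W W W W W W R, B),
    (W, nb W B R B W B B W B W, W),
    (W, nb W B W B W B B R B W, W),
    (B, nb B W W W W W W W R W, B),
    (B, nb B W R W W W W W W W, B),
    (W, nb B W B W R W B W W B, R),
    (B, nb B W W B W W W W R W, B),
    (B, nb B W R B W W W W W W, B),
    (B, nb B W W B W W W R W W, B),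
    (B, nb B R W B W W W W W W, B),
    (B, nb B W W B W W R W W W, B),
    (R, nb R B W B W B B W B W, R),
    (R, nb W B R B W B B W B W, W),
    (B, nb B W W R W W W W W R, B),
    (W, nb W B R B W B B R B W, W),
    (B, nb B W R W W W W R W W, B),
    (W, nb B W B W R R B W W B, R),
    (B, nb B W R B W W W W R W, B),
    (B, nb B W W R W W W W R W, B),
    (B, nb B W R B W W W R W W, B),
    (B, nb B R W B W W W R W W, B),
    (R, nb B R W B W W B B W B, R),
    (R, nb B W W B R W B B W B, W),
    (W, nb B W W B R R B B W B, W),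
    (W, nb W B R W B W B R B W, R),
    (R, nb W B R W B W B W B W, R)] := by
  have key : ∀ (L : List Rule),
      (∀ r₁ ∈ L, ∀ r₂ ∈ L, r₁.1 = r₂.1 →
        (∃ k ∈ Finset.range 5, r₁.2.1 = rho^[k] r₂.2.1) → r₁.2.2 = r₂.2.2) →
      RotationConsistent L := by
    intro L h r₁ h₁ r₂ h₂ hs hrot
    exact h r₁ h₁ r₂ h₂ hs ((rotEquiv_iff _ _).mp hrot)
  apply key
  decide
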